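/- For all f, g ∈ dom t_α the limit lim_{k→∞} ∫_{−k}^{k} f·conj(g)·r dx exists. -/

import Mathlib

open MeasureTheory Filter

/-- `η_α(x) := (√(|x|^α+1) − √(|x|^α))·|r(x)|`. -/
noncomputable def eta (α : ℝ) (r : ℝ → ℝ) (x : ℝ) : ℝ :=
  (Real.sqrt (|x| ^ α + 1) - Real.sqrt (|x| ^ α)) * |r x|

/-- `ω_α(x) := √(|x|^α)·|r(x)|`. -/
noncomputable def omegaW (α : ℝ) (r : ℝ → ℝ) (x : ℝ) : ℝ :=
  Real.sqrt (|x| ^ α) * |r x|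

/-- `r₊(x) := x·r(x)`. -/
def rplus (r : ℝ → ℝ) (x : ℝ) : ℝ := x * r x

/-- `r₋(x) := r(x)/x` (with junk value `0` at `x = 0`, where `r` vanishes anyway). -/
noncomputable def rminus (r : ℝ → ℝ) (x : ℝ) : ℝ := r x / x

/-- Membership in the weighted space `L²(w)`. -/
def MemL2W (w : ℝ → ℝ) (f : ℝ → ℂ) : Prop :=
  Integrable (fun x => ‖f x‖ ^ 2 * w x)

/-- Even part of a function. -/
noncomputable def evenPart (f : ℝ → ℂ) (x : ℝ) : ℂ := (f x + f (-x)) / 2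

/-- Odd part of a function. -/
noncomputable def oddPart (f : ℝ → ℂ) (x : ℝ) : ℂ := (f x - f (-x)) / 2

/-- `dom t_α = {f ∈ L²(r₋) : f_e ∈ L²(η_α), f_o ∈ L²(ω_α)}`. -/
noncomputable def DomT (α : ℝ) (r : ℝ → ℝ) (f : ℝ → ℂ) : Prop :=
  MemL2W (rminus r) f ∧ MemL2W (eta α r) (evenPart f) ∧ MemL2W (omegaW α r) (oddPart f)

/-- The squared norm `t_α(f,f) = 2‖f_o‖²_{ω_α} + ‖f‖²_{η_α}`. -/
noncomputable def Qform (α : ℝ) (r : ℝ → ℝ) (f : ℝ → ℂ) : ℝ :=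
  2 * (∫ x, ‖oddPart f x‖ ^ 2 * omegaW α r x) + ∫ x, ‖f x‖ ^ 2 * eta α r x

/-- An odd function integrates to zero over a symmetric interval. -/
lemma integral_Icc_odd (a : ℝ) (D : ℝ → ℂ) (hD : ∀ x, D (-x) = - D x) :
    ∫ x in Set.Icc (-a) a, D x = 0 := by
  have h1 : ∫ x in Set.Icc (-a) a, D x = ∫ x, (Set.Icc (-a) a).indicator D x :=
    (integral_indicator measurableSet_Icc).symm
  have h2 : ∫ x, (Set.Icc (-a) a).indicator D x
      = ∫ x, (Set.Icc (-a) a).indicator D (-x) := (integral_neg_eq_self _ _).symm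
  have h3 : ∀ x, (Set.Icc (-a) a).indicator D (-x) = - (Set.Icc (-a) a).indicator D x := by
    intro x
    by_cases hx : x ∈ Set.Icc (-a) a
    · have hx' : -x ∈ Set.Icc (-a) a := by
        simp only [Set.mem_Icc] at hx ⊢; constructor <;> linarith [hx.1, hx.2]
      rw [Set.indicator_of_mem hx' D, Set.indicator_of_mem hx D, hD]
    · have hx' : -x ∉ Set.Icc (-a) a := by
        simp only [Set.mem_Icc] at hx ⊢
        intro h; exact hx ⟨by linarith [h.2], by linarith [h.1]⟩
      rw [Set.indicator_of_notMem hx', Set.indicator_of_notMem hx, neg_zero]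
  have h4 : ∫ x, (Set.Icc (-a) a).indicator D x = - ∫ x, (Set.Icc (-a) a).indicator D x := by
    conv_lhs => rw [h2]
    simp_rw [h3]
    exact integral_neg _
  rw [h1]
  have h5 : (∫ x, (Set.Icc (-a) a).indicator D x) + ∫ x, (Set.Icc (-a) a).indicator D x = 0 := by
    nth_rewrite 2 [h4]; ring
  exact add_self_eq_zero.mp h5

set_option maxHeartbeats 1000000 in
/-- The basic weighted AM–GM estimate. -/
lemma key_bound (α ε : ℝ) (hα0 : 0 ≤ α) (hε : 0 < ε)
    (r : ℝ → ℝ) (hr0 : ∀ x, |x| ≤ ε → r x = 0) (x : ℝ) (A B : ℝ)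
    (hA : 0 ≤ A) (hB : 0 ≤ B) :
    A * B * |r x| ≤ (1/2) * (A ^ 2 * eta α r x)
      + (1 + (Real.sqrt (ε ^ α))⁻¹ / 2) * (B ^ 2 * omegaW α r x) := by
  by_cases hrx : r x = 0
  · simp [eta, omegaW, hrx]
  · have hxε : ε < |x| := by
      by_contra h
      exact hrx (hr0 x (le_of_not_gt h))
    set s : ℝ := |x| ^ α with hs
    have hs0 : 0 ≤ s := Real.rpow_nonneg (abs_nonneg x) α
    set t : ℝ := Real.sqrt s with ht
    set u : ℝ := Real.sqrt (s + 1) with hu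
    have ht0nn : 0 ≤ t := Real.sqrt_nonneg _
    have hu0 : 0 ≤ u := Real.sqrt_nonneg _
    have ht2 : t ^ 2 = s := Real.sq_sqrt hs0
    have hu2 : u ^ 2 = s + 1 := Real.sq_sqrt (by linarith)
    have htu : t ≤ u := Real.sqrt_le_sqrt (by linarith)
    have hut1 : u ≤ t + 1 := by nlinarith
    have hεα : Real.sqrt (ε ^ α) ≤ t := by
      apply Real.sqrt_le_sqrt
      exact Real.rpow_le_rpow hε.le hxε.le hα0
    have hεα0 : 0 < Real.sqrt (ε ^ α) :=
      Real.sqrt_pos.mpr (Real.rpow_pos_of_pos hε α)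
    have ht0' : 0 < t := lt_of_lt_of_le hεα0 hεα
    have hR0 : 0 < |r x| := abs_pos.mpr hrx
    have hRω : |r x| ≤ (Real.sqrt (ε ^ α))⁻¹ * (t * |r x|) := by
      rw [← mul_assoc]
      nth_rewrite 1 [← one_mul |r x|]
      apply mul_le_mul_of_nonneg_right _ (abs_nonneg _)
      rw [← inv_mul_cancel₀ hεα0.ne']
      exact mul_le_mul_of_nonneg_left hεα (inv_nonneg.mpr hεα0.le)
    have hsq1 : Real.sqrt (u - t) ^ 2 = u - t := Real.sq_sqrt (by linarith)
    have hsq2 : Real.sqrt (u + t) ^ 2 = u + t := Real.sq_sqrt (by linarith)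
    have hprod : Real.sqrt (u - t) * Real.sqrt (u + t) = 1 := by
      rw [← Real.sqrt_mul (by linarith)]
      have : (u - t) * (u + t) = 1 := by nlinarith
      rw [this, Real.sqrt_one]
    have hamgm : 2 * (A * B) ≤ A ^ 2 * (u - t) + B ^ 2 * (u + t) := by
      nlinarith [sq_nonneg (A * Real.sqrt (u - t) - B * Real.sqrt (u + t)), hsq1, hsq2, hprod,
        mul_nonneg hA hB]
    have heta : eta α r x = (u - t) * |r x| := rfl
    have homega : omegaW α r x = t * |r x| := rfl
    rw [heta, homega]
    set R := |r x| with hRdef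
    have step1 : A * B * R ≤ (1/2) * (A ^ 2 * ((u - t) * R)) + (1/2) * (B ^ 2 * ((u + t) * R)) := by
      nlinarith [mul_le_mul_of_nonneg_right hamgm hR0.le]
    have step3 : B ^ 2 * ((u + t) * R) ≤ 2 * (B ^ 2 * (t * R)) + B ^ 2 * R := by
      have h := mul_le_mul_of_nonneg_left
        (mul_le_mul_of_nonneg_right (by nlinarith : u + t ≤ 2 * t + 1) hR0.le) (sq_nonneg B)
      nlinarith [h]
    have step4 : B ^ 2 * R ≤ (Real.sqrt (ε ^ α))⁻¹ * (B ^ 2 * (t * R)) := by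
      have h := mul_le_mul_of_nonneg_left hRω (sq_nonneg B)
      nlinarith [h]
    nlinarith [step1, step3, step4, mul_nonneg (sq_nonneg B) hR0.le,
      mul_nonneg (sq_nonneg B) (mul_nonneg ht0nn hR0.le)]

/-- For all `f, g ∈ dom t_α` the limit `lim_{k→∞} ∫_{−k}^{k} f·conj(g)·r dx` exists. -/
theorem truncated_integrals_converge (α ε : ℝ) (hα : α ∈ Set.Icc (0 : ℝ) 2) (hε : 0 < ε)
    (r : ℝ → ℝ) (hrm : Measurable r) (hr0 : ∀ x, |x| ≤ ε → r x = 0)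
    (hrpos : ∀ᵐ x ∂(volume : Measure ℝ), ε < |x| → 0 < x * r x)
    (hrodd : ∀ x, r (-x) = -r x)
    (f g : ℝ → ℂ) (hf : Measurable f) (hg : Measurable g)
    (hfd : DomT α r f) (hgd : DomT α r g) :
    ∃ L : ℂ, Tendsto (fun k : ℕ =>
        ∫ x in Set.Icc (-(k : ℝ)) (k : ℝ), f x * (starRingEnd ℂ) (g x) * ((r x : ℝ) : ℂ))
      atTop (nhds L) := by
  obtain ⟨hα0, hα2⟩ := hα
  -- measurability of the building blocks
  have hfe : Measurable (evenPart f) := ((hf.add (hf.comp measurable_neg)).div_const 2)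
  have hfo : Measurable (oddPart f) := ((hf.sub (hf.comp measurable_neg)).div_const 2)
  have hge : Measurable (evenPart g) := ((hg.add (hg.comp measurable_neg)).div_const 2)
  have hgo : Measurable (oddPart g) := ((hg.sub (hg.comp measurable_neg)).div_const 2)
  have hrC : Measurable (fun x => ((r x : ℝ) : ℂ)) := Complex.measurable_ofReal.comp hrm
  set F1 : ℝ → ℂ := fun x => evenPart f x * (starRingEnd ℂ) (oddPart g x) * ((r x : ℝ) : ℂ)
    with hF1def
  set F2 : ℝ → ℂ := fun x => oddPart f x * (starRingEnd ℂ) (evenPart g x) * ((r x : ℝ) : ℂ)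
    with hF2def
  have hnorm : ∀ (a b : ℝ → ℂ) (x : ℝ),
      ‖a x * (starRingEnd ℂ) (b x) * ((r x : ℝ) : ℂ)‖ = ‖a x‖ * ‖b x‖ * |r x| := by
    intro a b x
    rw [norm_mul, norm_mul, RingHomIsometric.norm_map, Complex.norm_real, Real.norm_eq_abs]
  -- global integrability of F1 and F2
  have hF1i : Integrable F1 := by
    apply Integrable.mono'
      (((hfd.2.1.const_mul (1/2)).add (hgd.2.2.const_mul (1 + (Real.sqrt (ε ^ α))⁻¹ / 2))))
      (((hfe.mul (Complex.continuous_conj.measurable.comp hgo)).mul hrC).aestronglyMeasurable)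
    filter_upwards with x
    simp only [Pi.add_apply, Pi.mul_apply, Function.comp_apply]
    rw [hnorm (evenPart f) (oddPart g) x]
    exact key_bound α ε hα0 hε r hr0 x _ _ (norm_nonneg _) (norm_nonneg _)
  have hF2i : Integrable F2 := by
    apply Integrable.mono'
      (((hgd.2.1.const_mul (1/2)).add (hfd.2.2.const_mul (1 + (Real.sqrt (ε ^ α))⁻¹ / 2))))
      (((hfo.mul (Complex.continuous_conj.measurable.comp hge)).mul hrC).aestronglyMeasurable)
    filter_upwards with x
    simp only [Pi.add_apply, Pi.mul_apply, Function.comp_apply]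
    rw [hnorm (oddPart f) (evenPart g) x]
    have := key_bound α ε hα0 hε r hr0 x ‖evenPart g x‖ ‖oddPart f x‖
      (norm_nonneg _) (norm_nonneg _)
    linarith [this]
  have hI : Integrable (fun x => F1 x + F2 x) := hF1i.add hF2i
  -- the decomposition
  set D : ℝ → ℂ := fun x =>
    (evenPart f x * (starRingEnd ℂ) (evenPart g x)
      + oddPart f x * (starRingEnd ℂ) (oddPart g x)) * ((r x : ℝ) : ℂ) with hDdef
  have hDecomp : ∀ x, f x * (starRingEnd ℂ) (g x) * ((r x : ℝ) : ℂ) = D x + (F1 x + F2 x) := by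
    intro x
    rw [hDdef, hF1def, hF2def]
    simp only [evenPart, oddPart, map_add, map_sub, map_div₀, map_ofNat]
    ring
  have hDodd : ∀ x, D (-x) = - D x := by
    intro x
    rw [hDdef]
    simp only [evenPart, oddPart, neg_neg, hrodd, Complex.ofReal_neg, map_add, map_sub,
      map_div₀, map_ofNat]
    ring
  -- equality of the truncated integrals
  have key : ∀ k : ℕ,
      ∫ x in Set.Icc (-(k : ℝ)) (k : ℝ), f x * (starRingEnd ℂ) (g x) * ((r x : ℝ) : ℂ)
        = ∫ x in Set.Icc (-(k : ℝ)) (k : ℝ), (F1 x + F2 x) := by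
    intro k
    have hloc : IntegrableOn (fun x => f x * (starRingEnd ℂ) (g x) * ((r x : ℝ) : ℂ))
        (Set.Icc (-(k : ℝ)) (k : ℝ)) := by
      apply Integrable.mono'
        ((((hfd.1.add hgd.1).const_mul ((k : ℝ) / 2))).restrict
          (s := Set.Icc (-(k : ℝ)) (k : ℝ)))
        (((hf.mul (Complex.continuous_conj.measurable.comp hg)).mul hrC).aestronglyMeasurable.restrict)
      rw [ae_restrict_iff' measurableSet_Icc]
      filter_upwards [hrpos] with x hx hxmem
      simp only [Pi.add_apply, Pi.mul_apply, Function.comp_apply]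
      rw [hnorm f g x]
      obtain ⟨hx1, hx2⟩ := Set.mem_Icc.mp hxmem
      have hxk : |x| ≤ (k : ℝ) := abs_le.mpr ⟨hx1, hx2⟩
      by_cases hcase : |x| ≤ ε
      · rw [hr0 x hcase]
        simp [rminus, hr0 x hcase]
      · push_neg at hcase
        have hxr : 0 < x * r x := hx hcase
        have hx0 : x ≠ 0 := by
          intro h; rw [h] at hcase; simp at hcase; linarith
        have hrm0 : 0 < rminus r x := by
          rw [rminus]
          rcases lt_or_gt_of_ne hx0 with h | h
          · have : r x < 0 := by nlinarith
            exact div_pos_of_neg_of_neg this h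
          · have : 0 < r x := by nlinarith
            exact div_pos this h
        have hrm0' : 0 < r x / x := by rw [rminus] at hrm0; exact hrm0
        have habs : |r x| = |x| * rminus r x := by
          have hxx : x * (r x / x) = r x := by field_simp
          rw [rminus]
          calc |r x| = |x * (r x / x)| := by rw [hxx]
            _ = |x| * |r x / x| := abs_mul _ _
            _ = |x| * (r x / x) := by rw [abs_of_pos hrm0']
        have hrle : |r x| ≤ (k : ℝ) * rminus r x := by
          rw [habs]
          exact mul_le_mul_of_nonneg_right hxk hrm0.le
        have hfg : ‖f x‖ * ‖g x‖ ≤ (‖f x‖ ^ 2 + ‖g x‖ ^ 2) / 2 := by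
          nlinarith [sq_nonneg (‖f x‖ - ‖g x‖)]
        have h1 : ‖f x‖ * ‖g x‖ * |r x| ≤ ((‖f x‖ ^ 2 + ‖g x‖ ^ 2) / 2) * ((k:ℝ) * rminus r x) := by
          apply mul_le_mul hfg hrle (abs_nonneg _)
          positivity
        calc ‖f x‖ * ‖g x‖ * |r x|
            ≤ ((‖f x‖ ^ 2 + ‖g x‖ ^ 2) / 2) * ((k:ℝ) * rminus r x) := h1
          _ = (k : ℝ) / 2 * (‖f x‖ ^ 2 * rminus r x + ‖g x‖ ^ 2 * rminus r x) := by ring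
    have hDloc : IntegrableOn D (Set.Icc (-(k : ℝ)) (k : ℝ)) := by
      have hDeq : D = fun x =>
          f x * (starRingEnd ℂ) (g x) * ((r x : ℝ) : ℂ) - F1 x - F2 x := by
        funext x
        have := hDecomp x
        rw [this]; ring
      rw [hDeq]
      exact (hloc.sub hF1i.integrableOn).sub hF2i.integrableOn
    calc ∫ x in Set.Icc (-(k : ℝ)) (k : ℝ), f x * (starRingEnd ℂ) (g x) * ((r x : ℝ) : ℂ)
        = ∫ x in Set.Icc (-(k : ℝ)) (k : ℝ), (D x + (F1 x + F2 x)) :=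
          setIntegral_congr_fun measurableSet_Icc (fun x _ => hDecomp x)
      _ = (∫ x in Set.Icc (-(k : ℝ)) (k : ℝ), D x)
          + ∫ x in Set.Icc (-(k : ℝ)) (k : ℝ), (F1 x + F2 x) :=
          integral_add hDloc (hI.integrableOn)
      _ = ∫ x in Set.Icc (-(k : ℝ)) (k : ℝ), (F1 x + F2 x) := by
          rw [integral_Icc_odd _ D hDodd, zero_add]
  -- the limit
  have hmono : Monotone (fun k : ℕ => Set.Icc (-(k : ℝ)) (k : ℝ)) := by
    intro a b hab
    apply Set.Icc_subset_Icc
    · simp only [neg_le_neg_iff]; exact_mod_cast hab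
    · exact_mod_cast hab
  have hunion : (⋃ k : ℕ, Set.Icc (-(k : ℝ)) (k : ℝ)) = Set.univ := by
    ext x
    simp only [Set.mem_iUnion, Set.mem_Icc, Set.mem_univ, iff_true]
    obtain ⟨k, hk⟩ := exists_nat_ge |x|
    exact ⟨k, abs_le.mp hk⟩
  have htend := tendsto_setIntegral_of_monotone (fun k : ℕ => measurableSet_Icc) hmono
    (by rw [hunion]; exact hI.integrableOn : IntegrableOn (fun x => F1 x + F2 x)
      (⋃ k : ℕ, Set.Icc (-(k : ℝ)) (k : ℝ)) volume)
  refine ⟨∫ x in (⋃ k : ℕ, Set.Icc (-(k : ℝ)) (k : ℝ)), (F1 x + F2 x), ?_⟩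
  exact htend.congr fun k => (key k).symm
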